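/- Let M ≥ 2 be an integer. Let X, X₂, …, X_M be identically distributed random elements of 𝒳 with X₂,…,X_M mutually independent, each distributed as X, and (X₂,…,X_M) independent of the pair (X,Y), where Y is a random element of 𝒴. Let q : 𝒳 × 𝒴 → (0,∞) be measurable, let α > 0, let X̄ be independent of everything with the same law as X, assume 0 < E[q(X̄,y)^α] < ∞ for every y, and define i_α(x,y) = log( q(x,y)^α / E[q(X̄,y)^α] ). Then the probability that some competing codeword achieves a metric at least as large as the transmitted one satisfies P[∃ j ∈ {2,…,M} : q(X_j, Y) ≥ q(X, Y)] ≤ E[ exp( −[ i_α(X,Y) − log(M−1) ]⁺ ) ], where [a]⁺ = max{0,a}. In particular, with M = 2^k codewords the bound reads E[ exp( −[ i_α(X,Y) − log(2^k − 1) ]⁺ ) ]. -/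

import Mathlib

open MeasureTheory ProbabilityTheory
open scoped ENNReal

/-- **Abstract form of Theorem 1 (the RCUs bound).**
A random codebook of `M` i.i.d. codewords is used: `X` is the transmitted codeword, `Y` the
channel output, and `C j`, `j = 1, …, M-1`, are the competing codewords `X₂, …, X_M`, each
distributed as `X`, mutually independent, and (as a vector) independent of `(X, Y)`.  The
metric `q` is positive and measurable, `α > 0`, `X̄` is an independent copy of `X` (encoded
via its law `Measure.map X P`), `0 < E[q(X̄,y)^α] < ∞` for every `y`, and
`i_α(x,y) = log(q(x,y)^α / E[q(X̄,y)^α])`.  Then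
`P[∃ j : q(X_j, Y) ≥ q(X, Y)] ≤ E[exp(−[i_α(X,Y) − log(M−1)]⁺)]`;
in particular, with `M = 2^k` codewords the bound reads
`E[exp(−[i_α(X,Y) − log(2^k−1)]⁺)]`. -/
theorem rcus_bound
    {Ω 𝒳 𝒴 : Type*} [MeasurableSpace Ω] [MeasurableSpace 𝒳] [MeasurableSpace 𝒴]
    (P : Measure Ω) [IsProbabilityMeasure P]
    (M : ℕ) (hM : 2 ≤ M)
    (X : Ω → 𝒳) (Y : Ω → 𝒴) (C : Fin (M - 1) → Ω → 𝒳)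
    (hX : Measurable X) (hY : Measurable Y) (hC : ∀ j, Measurable (C j))
    (hident : ∀ j, Measure.map (C j) P = Measure.map X P)
    (hCindep : iIndepFun C P)
    (hCXY : IndepFun (fun ω => fun j => C j ω) (fun ω => (X ω, Y ω)) P)
    (q : 𝒳 × 𝒴 → ℝ) (hq : Measurable q) (hqpos : ∀ p, 0 < q p)
    (α : ℝ) (hα : 0 < α)
    (hint : ∀ y, Integrable (fun x' => q (x', y) ^ α) (Measure.map X P))
    (hpos : ∀ y, 0 < ∫ x', q (x', y) ^ α ∂(Measure.map X P))
    (iα : 𝒳 → 𝒴 → ℝ)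
    (hiα : ∀ x y,
      iα x y = Real.log (q (x, y) ^ α / ∫ x', q (x', y) ^ α ∂(Measure.map X P))) :
    P {ω | ∃ j, q (X ω, Y ω) ≤ q (C j ω, Y ω)} ≤
      ∫⁻ ω, ENNReal.ofReal
        (Real.exp (-(max 0 (iα (X ω) (Y ω) - Real.log ((M : ℝ) - 1))))) ∂P
    ∧ ∀ k : ℕ, M = 2 ^ k →
        P {ω | ∃ j, q (X ω, Y ω) ≤ q (C j ω, Y ω)} ≤
          ∫⁻ ω, ENNReal.ofReal
            (Real.exp (-(max 0 (iα (X ω) (Y ω) - Real.log ((2 : ℝ) ^ k - 1))))) ∂P := by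
  classical
  have hXY : Measurable fun ω => (X ω, Y ω) := hX.prodMk hY
  have hCvec : Measurable fun ω => fun j => C j ω := measurable_pi_lambda _ hC
  set μX : Measure 𝒳 := Measure.map X P with hμX
  set μXY : Measure (𝒳 × 𝒴) := Measure.map (fun ω => (X ω, Y ω)) P with hμXY
  set μC : Measure (Fin (M - 1) → 𝒳) := Measure.map (fun ω => fun j => C j ω) P with hμC
  haveI : IsProbabilityMeasure μX := Measure.isProbabilityMeasure_map hX.aemeasurable
  haveI : IsProbabilityMeasure μXY := Measure.isProbabilityMeasure_map hXY.aemeasurable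
  haveI : IsProbabilityMeasure μC := Measure.isProbabilityMeasure_map hCvec.aemeasurable
  set Efun : 𝒴 → ℝ := fun y => ∫ x', q (x', y) ^ α ∂μX with hEfun
  have hqα : Measurable fun p : 𝒳 × 𝒴 => q p ^ α :=
    (Real.continuous_rpow_const hα.le).measurable.comp hq
  have hEmeas : Measurable Efun := by
    have hsm : StronglyMeasurable fun p : 𝒴 × 𝒳 => q (p.2, p.1) ^ α :=
      (hqα.comp (measurable_snd.prodMk measurable_fst)).stronglyMeasurable
    exact hsm.integral_prod_right'.measurable
  set F : 𝒳 × 𝒴 → ℝ≥0∞ := fun p =>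
    ENNReal.ofReal
      (Real.exp (-(max 0 (Real.log (q p ^ α / Efun p.2) - Real.log ((M : ℝ) - 1))))) with hFdef
  have hF : Measurable F := by
    have h1 : Measurable fun p : 𝒳 × 𝒴 => q p ^ α / Efun p.2 :=
      hqα.div (hEmeas.comp measurable_snd)
    have h2 : Measurable fun p : 𝒳 × 𝒴 => Real.log (q p ^ α / Efun p.2) :=
      Real.measurable_log.comp h1
    exact ENNReal.measurable_ofReal.comp
      (Real.measurable_exp.comp
        ((measurable_const.max (h2.sub measurable_const)).neg))
  -- the event as a measurable set on the product space
  set S : Set ((𝒳 × 𝒴) × (Fin (M - 1) → 𝒳)) := {p | ∃ j, q p.1 ≤ q (p.2 j, p.1.2)} with hSdef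
  have hS : MeasurableSet S := by
    have : S = ⋃ j, {p : (𝒳 × 𝒴) × (Fin (M - 1) → 𝒳) | q p.1 ≤ q (p.2 j, p.1.2)} := by
      ext p; simp [hSdef, Set.mem_iUnion]
    rw [this]
    exact MeasurableSet.iUnion fun j =>
      measurableSet_le (hq.comp measurable_fst)
        (hq.comp (((measurable_pi_apply j).comp measurable_snd).prodMk
          (measurable_snd.comp measurable_fst)))
  have hmap : Measure.map (fun ω => ((X ω, Y ω), fun j => C j ω)) P = μXY.prod μC :=
    (indepFun_iff_map_prod_eq_prod_map_map hXY.aemeasurable hCvec.aemeasurable).mp hCXY.symm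
  have hPE : P {ω | ∃ j, q (X ω, Y ω) ≤ q (C j ω, Y ω)} = (μXY.prod μC) S := by
    rw [← hmap, Measure.map_apply (hXY.prodMk hCvec) hS]
    rfl
  have hM1R : (1 : ℝ) ≤ (M : ℝ) - 1 := by
    have : (2 : ℝ) ≤ (M : ℝ) := by exact_mod_cast hM
    linarith
  have hM1pos : (0 : ℝ) < (M : ℝ) - 1 := lt_of_lt_of_le one_pos hM1R
  have hcastM : ((M - 1 : ℕ) : ℝ) = (M : ℝ) - 1 := by
    have h1 : 1 ≤ M := le_trans one_le_two hM
    push_cast [Nat.cast_sub h1]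
    ring
  -- pointwise bound on slices
  have hslice : ∀ p : 𝒳 × 𝒴, μC (Prod.mk p ⁻¹' S) ≤ F p := by
    intro p
    set B : Set 𝒳 := {x' | q p ≤ q (x', p.2)} with hBdef
    have hB : MeasurableSet B :=
      measurableSet_le measurable_const (hq.comp (measurable_id.prodMk measurable_const))
    have hpre : Prod.mk p ⁻¹' S = ⋃ j, (fun c : Fin (M - 1) → 𝒳 => c j) ⁻¹' B := by
      ext c; simp [hSdef, hBdef, Set.mem_iUnion]
    have hcoord : ∀ j, μC ((fun c : Fin (M - 1) → 𝒳 => c j) ⁻¹' B) = μX B := by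
      intro j
      rw [hμC, Measure.map_apply hCvec ((measurable_pi_apply j) hB)]
      have : (fun ω => fun j => C j ω) ⁻¹' ((fun c : Fin (M - 1) → 𝒳 => c j) ⁻¹' B)
          = C j ⁻¹' B := rfl
      rw [this, ← Measure.map_apply (hC j) hB, hident j]
    -- union bound
    have hub : μC (Prod.mk p ⁻¹' S) ≤ ((M - 1 : ℕ) : ℝ≥0∞) * μX B := by
      rw [hpre]
      refine le_trans (measure_iUnion_le _) ?_
      rw [tsum_fintype]
      simp only [hcoord]
      rw [Finset.sum_const, Finset.card_univ, Fintype.card_fin, nsmul_eq_mul]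
    have hle1 : μC (Prod.mk p ⁻¹' S) ≤ 1 := prob_le_one
    -- Markov / Chernoff bound on μX B
    have hqp : (0 : ℝ) < q p ^ α := Real.rpow_pos_of_pos (hqpos p) α
    have hEp : (0 : ℝ) < Efun p.2 := hpos p.2
    have hmarkov : μX B ≤ ENNReal.ofReal (Efun p.2 / q p ^ α) := by
      have hsub : B ⊆ {x' | ENNReal.ofReal (q p ^ α)
          ≤ ENNReal.ofReal (q (x', p.2) ^ α)} := by
        intro x' hx'
        exact ENNReal.ofReal_le_ofReal (Real.rpow_le_rpow (hqpos p).le hx' hα.le)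
      have hmeas' : AEMeasurable (fun x' => ENNReal.ofReal (q (x', p.2) ^ α)) μX :=
        (ENNReal.measurable_ofReal.comp
          (hqα.comp (measurable_id.prodMk measurable_const))).aemeasurable
      have h0 : ENNReal.ofReal (q p ^ α) ≠ 0 := by
        simp [ENNReal.ofReal_eq_zero, not_le, hqp]
      calc μX B ≤ μX {x' | ENNReal.ofReal (q p ^ α) ≤ ENNReal.ofReal (q (x', p.2) ^ α)} :=
            measure_mono hsub
        _ ≤ (∫⁻ x', ENNReal.ofReal (q (x', p.2) ^ α) ∂μX) / ENNReal.ofReal (q p ^ α) :=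
            meas_ge_le_lintegral_div hmeas' h0 ENNReal.ofReal_ne_top
        _ = ENNReal.ofReal (Efun p.2) / ENNReal.ofReal (q p ^ α) := by
            rw [← ofReal_integral_eq_lintegral_ofReal (hint p.2)
              (Filter.Eventually.of_forall fun x' =>
                (Real.rpow_pos_of_pos (hqpos _) α).le)]
        _ = ENNReal.ofReal (Efun p.2 / q p ^ α) := (ENNReal.ofReal_div_of_pos hqp).symm
    -- exp identity
    have hratio : Efun p.2 / q p ^ α
        = Real.exp (-(Real.log (q p ^ α / Efun p.2))) := by
      rw [Real.exp_neg, Real.exp_log (div_pos hqp hEp)]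
      field_simp
    set I : ℝ := Real.log (q p ^ α / Efun p.2) with hIdef
    set L : ℝ := Real.log ((M : ℝ) - 1) with hLdef
    rcases le_or_gt I L with hIL | hIL
    · have hmax : max 0 (I - L) = 0 := max_eq_left (by linarith)
      have : F p = 1 := by
        simp [hFdef, ← hIdef, ← hLdef, hmax]
      rw [this]; exact hle1
    · have hmax : max 0 (I - L) = I - L := max_eq_right (by linarith)
      have hFp : F p = ENNReal.ofReal (((M : ℝ) - 1) * Real.exp (-I)) := by
        have hexp : Real.exp (L - I) = ((M : ℝ) - 1) * Real.exp (-I) := by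
          rw [Real.exp_sub, Real.exp_log hM1pos, Real.exp_neg]
          field_simp
        simp [hFdef, ← hIdef, ← hLdef, hmax, neg_sub, hexp]
      rw [hFp]
      calc μC (Prod.mk p ⁻¹' S) ≤ ((M - 1 : ℕ) : ℝ≥0∞) * μX B := hub
        _ ≤ ((M - 1 : ℕ) : ℝ≥0∞) * ENNReal.ofReal (Efun p.2 / q p ^ α) := by
            exact mul_le_mul_right hmarkov _
        _ = ENNReal.ofReal (((M : ℝ) - 1) * Real.exp (-I)) := by
            rw [hratio, ← ENNReal.ofReal_natCast (M - 1), hcastM,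
              ← ENNReal.ofReal_mul hM1pos.le]
  -- put things together
  have key : P {ω | ∃ j, q (X ω, Y ω) ≤ q (C j ω, Y ω)} ≤
      ∫⁻ ω, ENNReal.ofReal
        (Real.exp (-(max 0 (iα (X ω) (Y ω) - Real.log ((M : ℝ) - 1))))) ∂P := by
    have h1 : (μXY.prod μC) S = ∫⁻ p, μC (Prod.mk p ⁻¹' S) ∂μXY := Measure.prod_apply hS
    have h2 : ∫⁻ p, μC (Prod.mk p ⁻¹' S) ∂μXY ≤ ∫⁻ p, F p ∂μXY := lintegral_mono hslice
    have h3 : ∫⁻ p, F p ∂μXY = ∫⁻ ω, F (X ω, Y ω) ∂P := by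
      rw [hμXY, lintegral_map hF hXY]
    have h4 : ∀ ω, F (X ω, Y ω) = ENNReal.ofReal
        (Real.exp (-(max 0 (iα (X ω) (Y ω) - Real.log ((M : ℝ) - 1))))) := by
      intro ω
      simp only [hFdef, hiα (X ω) (Y ω), hEfun, hμX]
    calc P {ω | ∃ j, q (X ω, Y ω) ≤ q (C j ω, Y ω)} = (μXY.prod μC) S := hPE
      _ = ∫⁻ p, μC (Prod.mk p ⁻¹' S) ∂μXY := h1
      _ ≤ ∫⁻ p, F p ∂μXY := h2
      _ = ∫⁻ ω, F (X ω, Y ω) ∂P := h3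
      _ = ∫⁻ ω, ENNReal.ofReal
            (Real.exp (-(max 0 (iα (X ω) (Y ω) - Real.log ((M : ℝ) - 1))))) ∂P := by
          simp only [h4]
  refine ⟨key, ?_⟩
  intro k hk
  have hcast2 : ((M : ℝ) - 1) = (2 : ℝ) ^ k - 1 := by
    rw [hk]; push_cast; ring
  rw [← hcast2]
  exact key
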